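/- The Stratified-NMF objective Σ_{i=1}^s ‖A(i) − 𝟏 v(i)^T − W(i) H‖_F² equals the standard NMF objective ‖Â − Ŵ Ĥ‖_F², where Â is the row-wise stacking of the A(i), Ŵ is the block matrix whose i-th block row is [0 … 0 𝟏_i 0 … 0 W(i)] (with 𝟏_i ∈ ℝ^{m_i} the all-ones vector in the i-th of s column blocks), and Ĥ stacks the rows v(1)^T, …, v(s)^T on top of H. -/
import Mathlib


open Matrix

variable {s r n : ℕ} {m : Fin s → ℕ}

/-- Row-wise stacking of the strata data matrices `A(i)`. -/
def Ahat (A : ∀ i : Fin s, Matrix (Fin (m i)) (Fin n) ℝ) :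
    Matrix ((i : Fin s) × Fin (m i)) (Fin n) ℝ :=
  fun p c => A p.1 p.2 c

/-- Block matrix whose `i`-th block row is `[0 … 0 𝟏_i 0 … 0 W(i)]`. -/
def What (W : ∀ i : Fin s, Matrix (Fin (m i)) (Fin r) ℝ) :
    Matrix ((i : Fin s) × Fin (m i)) (Fin s ⊕ Fin r) ℝ :=
  fun p j => match j with
    | Sum.inl i => if i = p.1 then 1 else 0
    | Sum.inr k => W p.1 p.2 k

/-- Stacking of the rows `v(1)ᵀ, …, v(s)ᵀ` on top of `H`. -/
def Hhat (v : Fin s → Fin n → ℝ) (H : Matrix (Fin r) (Fin n) ℝ) :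
    Matrix (Fin s ⊕ Fin r) (Fin n) ℝ :=
  fun j c => match j with
    | Sum.inl i => v i c
    | Sum.inr k => H k c

/-- The Stratified-NMF objective equals the standard NMF objective of the
block formulation: `Σ_i ‖A(i) - 𝟏 v(i)ᵀ - W(i) H‖_F² = ‖Â - Ŵ Ĥ‖_F²`. -/
theorem stmt_5 (A : ∀ i : Fin s, Matrix (Fin (m i)) (Fin n) ℝ)
    (v : Fin s → Fin n → ℝ)
    (W : ∀ i : Fin s, Matrix (Fin (m i)) (Fin r) ℝ)
    (H : Matrix (Fin r) (Fin n) ℝ) :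
    ∑ i, ∑ j, ∑ c, (A i j c - v i c - (W i * H) j c) ^ 2
      = ∑ p : (i : Fin s) × Fin (m i), ∑ c,
        (Ahat A p c - (What W * Hhat v H) p c) ^ 2 := by
  rw [Finset.sum_sigma']
  refine Finset.sum_congr rfl fun p _ => Finset.sum_congr rfl fun c _ => ?_
  have : (What W * Hhat v H) p c = v p.1 c + (W p.1 * H) p.2 c := by
    simp [Matrix.mul_apply, What, Hhat, Fintype.sum_sum_type, ite_mul]
  rw [this, Ahat]
  ring
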